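/- Fix integers r ≥ 2 and g. In the formal power series ring ℤ[[x, y]] define P = ∏_{i=1}^{r−1} (1 + x^i y^{i+1})^g · (1 + x^{i+1} y^i)^g · (1 − (xy)^i)^{−1} · (1 − (xy)^{i+1})^{−1}, where each factor 1 − (xy)^k (k ≥ 1) is a unit of ℤ[[x, y]] since it has constant term 1. Then: (1) the coefficient of the monomial y (that is, of x^0 y^1) in P is 0; (2) the coefficient of the monomial xy (that is, of x^1 y^1) in P is 1; (3) the coefficient of the monomial x^2 y in P is g; (4) for every integer i ≥ 3, the coefficient of the monomial x^i y in P is 0. -/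

import Mathlib

open MvPowerSeries


namespace DelBanoAux

abbrev R2 : Type := MvPowerSeries (Fin 2) ℤ

/-- the exponent finsupp (a, b) -/
noncomputable def mm (a b : ℕ) : Fin 2 →₀ ℕ := Finsupp.single 0 a + Finsupp.single 1 b

lemma mm_apply0 (a b : ℕ) : mm a b 0 = a := by
  simp [mm, Finsupp.single_apply]

lemma mm_apply1 (a b : ℕ) : mm a b 1 = b := by
  simp [mm, Finsupp.single_apply]

lemma mm_eq_self (m : Fin 2 →₀ ℕ) : m = mm (m 0) (m 1) := by
  ext s
  fin_cases s
  · simp [mm_apply0]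
  · simp [mm_apply1]

lemma mm_inj {a b a' b' : ℕ} (h : mm a b = mm a' b') : a = a' ∧ b = b' := by
  constructor
  · rw [← mm_apply0 a b, h, mm_apply0]
  · rw [← mm_apply1 a b, h, mm_apply1]

lemma mm_le {a b a' b' : ℕ} : mm a b ≤ mm a' b' ↔ a ≤ a' ∧ b ≤ b' := by
  constructor
  · intro h
    exact ⟨by simpa [mm_apply0] using Finsupp.le_def.mp h 0,
      by simpa [mm_apply1] using Finsupp.le_def.mp h 1⟩
  · rintro ⟨h1, h2⟩
    rw [Finsupp.le_def]
    intro s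
    fin_cases s
    · simpa [mm_apply0] using h1
    · simpa [mm_apply1] using h2

lemma mm_sub {a b a' b' : ℕ} : mm a b - mm a' b' = mm (a - a') (b - b') := by
  ext s
  fin_cases s
  · simp [Finsupp.tsub_apply, mm_apply0]
  · simp [Finsupp.tsub_apply, mm_apply1]


/-- `E f` : all coefficients of `f` in `y`-degree `≤ 1` vanish. -/
def E (f : R2) : Prop := ∀ m : Fin 2 →₀ ℕ, m 1 ≤ 1 → MvPowerSeries.coeff m f = 0

lemma E_zero : E 0 := fun m _ => map_zero _

lemma E_add {f g : R2} (hf : E f) (hg : E g) : E (f + g) := fun m hm => by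
  rw [map_add, hf m hm, hg m hm, add_zero]

lemma E_neg {f : R2} (hf : E f) : E (-f) := fun m hm => by
  rw [map_neg, hf m hm, neg_zero]

lemma E_mul (f : R2) {g : R2} (hg : E g) : E (f * g) := by
  intro m hm
  rw [MvPowerSeries.coeff_mul]
  apply Finset.sum_eq_zero
  rintro ⟨p, q⟩ hpq
  rw [Finset.HasAntidiagonal.mem_antidiagonal] at hpq
  have hq : q 1 ≤ 1 := by
    have := congrArg (fun z : Fin 2 →₀ ℕ => z 1) hpq
    simp only [Finsupp.add_apply] at this
    omega
  rw [hg q hq, mul_zero]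

lemma E_monomial {n : Fin 2 →₀ ℕ} {c : ℤ} (h : 2 ≤ n 1) : E (MvPowerSeries.monomial n c) := by
  intro m hm
  rw [MvPowerSeries.coeff_monomial, if_neg]
  intro h'
  rw [h'] at hm
  omega

/-- congruence modulo `E` -/
def Req (f g : R2) : Prop := E (f - g)

lemma Req_refl (f : R2) : Req f f := by
  unfold Req; rw [sub_self]; exact E_zero

lemma Req_mul {f f' g g' : R2} (h1 : Req f f') (h2 : Req g g') : Req (f * g) (f' * g') := by
  unfold Req at *
  have : f * g - f' * g' = f * (g - g') + g' * (f - f') := by ring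
  rw [this]
  exact E_add (E_mul _ h2) (E_mul _ h1)

lemma Req_pow {f g : R2} (h : Req f g) (n : ℕ) : Req (f ^ n) (g ^ n) := by
  induction n with
  | zero => simpa using Req_refl 1
  | succ k ih => rw [pow_succ, pow_succ]; exact Req_mul ih h

lemma Req_prod {s : Finset ℕ} {F G : ℕ → R2} (h : ∀ i ∈ s, Req (F i) (G i)) :
    Req (∏ i ∈ s, F i) (∏ i ∈ s, G i) := by
  classical
  induction s using Finset.induction_on with
  | empty => simpa using Req_refl 1
  | @insert x s' hx ih =>
    rw [Finset.prod_insert hx, Finset.prod_insert hx]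
    exact Req_mul (h x (Finset.mem_insert_self x s'))
      (ih fun i hi => h i (Finset.mem_insert_of_mem hi))

lemma Req_coeff {f g : R2} (h : Req f g) {m : Fin 2 →₀ ℕ} (hm : m 1 ≤ 1) :
    MvPowerSeries.coeff m f = MvPowerSeries.coeff m g := by
  have := h m hm
  rw [map_sub] at this
  exact sub_eq_zero.mp this


lemma XX (a b : ℕ) :
    (MvPowerSeries.X (0 : Fin 2) : R2) ^ a * MvPowerSeries.X (1 : Fin 2) ^ b =
      MvPowerSeries.monomial (mm a b) 1 := by
  rw [MvPowerSeries.X_pow_eq, MvPowerSeries.X_pow_eq, MvPowerSeries.monomial_mul_monomial,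
    one_mul]
  rfl

lemma tpow (i : ℕ) :
    ((MvPowerSeries.X (0 : Fin 2) : R2) * MvPowerSeries.X (1 : Fin 2)) ^ i =
      MvPowerSeries.monomial (mm i i) 1 := by
  rw [mul_pow, XX]

lemma Cpow (k : ℕ) :
    (MvPowerSeries.monomial (mm 2 1) (1 : ℤ) : R2) ^ k =
      MvPowerSeries.monomial (mm (2 * k) k) 1 := by
  have h1 : (MvPowerSeries.monomial (mm 2 1) (1 : ℤ) : R2) =
      MvPowerSeries.X (0 : Fin 2) ^ 2 * MvPowerSeries.X (1 : Fin 2) ^ 1 := (XX 2 1).symm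
  rw [h1, mul_pow, ← pow_mul, ← pow_mul, one_mul, XX]

lemma mul_natCast (m : Fin 2 →₀ ℕ) (n : ℕ) :
    (MvPowerSeries.monomial m (1 : ℤ) : R2) * (n : R2) =
      MvPowerSeries.monomial m (n : ℤ) := by
  have h : (n : R2) = MvPowerSeries.monomial 0 (n : ℤ) := by
    rw [MvPowerSeries.monomial_zero_eq_C_apply]
    exact (map_natCast (MvPowerSeries.C (σ := Fin 2) (R := ℤ)) n).symm
  rw [h, MvPowerSeries.monomial_mul_monomial, add_zero, one_mul]

lemma coeff_binom_y1 (G a : ℕ) :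
    MvPowerSeries.coeff (mm a 1)
      ((1 + MvPowerSeries.monomial (mm 2 1) (1 : ℤ) : R2) ^ G) =
    if a = 2 then (G : ℤ) else 0 := by
  rw [add_comm (1 : R2), add_pow]
  simp only [one_pow, mul_one]
  rw [map_sum]
  have hterm : ∀ k : ℕ, MvPowerSeries.coeff (mm a 1)
      ((MvPowerSeries.monomial (mm 2 1) (1 : ℤ) : R2) ^ k * (G.choose k : R2)) =
      if mm a 1 = mm (2 * k) k then (G.choose k : ℤ) else 0 := by
    intro k
    rw [Cpow, mul_natCast, MvPowerSeries.coeff_monomial]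
  rw [Finset.sum_congr rfl fun k _ => hterm k]
  rw [Finset.sum_eq_single 1]
  · rw [mul_one, Nat.choose_one_right]
    by_cases ha : a = 2
    · rw [if_pos, if_pos ha]; rw [ha]
    · rw [if_neg, if_neg ha]; intro h; exact ha (mm_inj h).1
  · intro k _ hk
    rw [if_neg]; intro h; exact hk ((mm_inj h).2).symm
  · intro h
    have hG : G = 0 := by simpa using h
    subst hG
    simp


lemma coeff_binom_y0 (G a : ℕ) :
    MvPowerSeries.coeff (mm a 0)
      ((1 + MvPowerSeries.monomial (mm 2 1) (1 : ℤ) : R2) ^ G) =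
    if a = 0 then 1 else 0 := by
  rw [add_comm (1 : R2), add_pow]
  simp only [one_pow, mul_one]
  rw [map_sum]
  have hterm : ∀ k : ℕ, MvPowerSeries.coeff (mm a 0)
      ((MvPowerSeries.monomial (mm 2 1) (1 : ℤ) : R2) ^ k * (G.choose k : R2)) =
      if mm a 0 = mm (2 * k) k then (G.choose k : ℤ) else 0 := by
    intro k
    rw [Cpow, mul_natCast, MvPowerSeries.coeff_monomial]
  rw [Finset.sum_congr rfl fun k _ => hterm k]
  rw [Finset.sum_eq_single 0]
  · rw [Nat.choose_zero_right, Nat.cast_one, mul_zero]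
    by_cases ha : a = 0
    · rw [if_pos, if_pos ha]; rw [ha]
    · rw [if_neg, if_neg ha]; intro h; exact ha (mm_inj h).1
  · intro k _ hk
    rw [if_neg]; intro h; exact hk ((mm_inj h).2).symm
  · intro h
    exact absurd (Finset.mem_range.mpr (Nat.succ_pos G)) h

end DelBanoAux


/- The length-one summand of del Baño's formula for the Hodge–Poincaré polynomial:
the power series
`P = ∏_{i=1}^{r-1} (1 + x^i y^(i+1))^g (1 + x^(i+1) y^i)^g (1-(xy)^i)⁻¹ (1-(xy)^(i+1))⁻¹`
in `ℤ[[x,y]]` (characterised by `P · ∏ (1-(xy)^i)(1-(xy)^(i+1)) = ∏ (numerators)`,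
which determines `P` uniquely since each `1 - (xy)^k` is a unit) has coefficient `0`
at `y`, coefficient `1` at `xy`, coefficient `g` at `x²y`, and coefficient `0` at
`x^i y` for all `i ≥ 3`. -/
open DelBanoAux in
theorem hodge_number_coefficients (r : ℕ) (hr : 2 ≤ r) (g : ℕ)
    (P : MvPowerSeries (Fin 2) ℤ)
    (hP : P * ∏ i ∈ Finset.Icc 1 (r - 1),
        ((1 - (MvPowerSeries.X (0 : Fin 2) * MvPowerSeries.X (1 : Fin 2)) ^ i) *
          (1 - (MvPowerSeries.X (0 : Fin 2) * MvPowerSeries.X (1 : Fin 2)) ^ (i + 1)))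
      = ∏ i ∈ Finset.Icc 1 (r - 1),
        ((1 + MvPowerSeries.X (0 : Fin 2) ^ i * MvPowerSeries.X (1 : Fin 2) ^ (i + 1)) ^ g *
          (1 + MvPowerSeries.X (0 : Fin 2) ^ (i + 1) * MvPowerSeries.X (1 : Fin 2) ^ i) ^ g)) :
    MvPowerSeries.coeff (Finsupp.single (1 : Fin 2) 1) P = 0 ∧
    MvPowerSeries.coeff
      (Finsupp.single (0 : Fin 2) 1 + Finsupp.single (1 : Fin 2) 1) P = 1 ∧
    MvPowerSeries.coeff
      (Finsupp.single (0 : Fin 2) 2 + Finsupp.single (1 : Fin 2) 1) P = (g : ℤ) ∧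
    ∀ i : ℕ, 3 ≤ i →
      MvPowerSeries.coeff
        (Finsupp.single (0 : Fin 2) i + Finsupp.single (1 : Fin 2) 1) P = 0 := by
  classical
  have h1mem : (1 : ℕ) ∈ Finset.Icc 1 (r - 1) := Finset.mem_Icc.mpr ⟨le_refl 1, by omega⟩
  -- the denominator is congruent to 1 - xy modulo E
  have hD : Req (∏ i ∈ Finset.Icc 1 (r - 1),
      ((1 - (MvPowerSeries.X (0 : Fin 2) * MvPowerSeries.X (1 : Fin 2)) ^ i) *
        (1 - (MvPowerSeries.X (0 : Fin 2) * MvPowerSeries.X (1 : Fin 2)) ^ (i + 1))))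
      (1 - MvPowerSeries.monomial (mm 1 1) (1 : ℤ)) := by
    have hstep : ∀ j : ℕ, 2 ≤ j →
        Req (1 - ((MvPowerSeries.X (0 : Fin 2) : R2) * MvPowerSeries.X (1 : Fin 2)) ^ j) 1 := by
      intro j hj
      unfold Req
      have hj' : (1 - ((MvPowerSeries.X (0 : Fin 2) : R2) * MvPowerSeries.X (1 : Fin 2)) ^ j) - 1
          = -(((MvPowerSeries.X (0 : Fin 2) : R2) * MvPowerSeries.X (1 : Fin 2)) ^ j) := by ring
      rw [hj', tpow]
      exact E_neg (E_monomial (by rw [mm_apply1]; exact hj))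
    have hfac : ∀ i ∈ Finset.Icc 1 (r - 1),
        Req ((1 - (MvPowerSeries.X (0 : Fin 2) * MvPowerSeries.X (1 : Fin 2)) ^ i) *
          (1 - (MvPowerSeries.X (0 : Fin 2) * MvPowerSeries.X (1 : Fin 2)) ^ (i + 1)))
          (if i = 1 then 1 - MvPowerSeries.monomial (mm 1 1) (1 : ℤ) else 1) := by
      intro i hi
      by_cases h : i = 1
      · subst h
        rw [if_pos rfl]
        unfold Req
        have key : (1 - ((MvPowerSeries.X (0 : Fin 2) : R2) * MvPowerSeries.X (1 : Fin 2)) ^ 1) *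
            (1 - ((MvPowerSeries.X (0 : Fin 2) : R2) * MvPowerSeries.X (1 : Fin 2)) ^ (1 + 1)) -
            (1 - MvPowerSeries.monomial (mm 1 1) (1 : ℤ)) =
            (1 - MvPowerSeries.monomial (mm 1 1) (1 : ℤ)) *
              (-(((MvPowerSeries.X (0 : Fin 2) : R2) * MvPowerSeries.X (1 : Fin 2)) ^ (1 + 1))) := by
          rw [tpow 1]; ring
        rw [key, tpow (1 + 1)]
        exact E_mul _ (E_neg (E_monomial (by rw [mm_apply1])))
      · rw [if_neg h]
        have hi2 : 2 ≤ i := by rw [Finset.mem_Icc] at hi; omega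
        have := Req_mul (hstep i hi2) (hstep (i + 1) (by omega))
        rwa [one_mul] at this
    have := Req_prod hfac
    rwa [Finset.prod_ite_eq' (Finset.Icc 1 (r - 1)) 1
      (fun _ => 1 - MvPowerSeries.monomial (mm 1 1) (1 : ℤ)), if_pos h1mem] at this
  -- the numerator is congruent to (1 + x^2 y)^g modulo E
  have hN : Req (∏ i ∈ Finset.Icc 1 (r - 1),
      ((1 + MvPowerSeries.X (0 : Fin 2) ^ i * MvPowerSeries.X (1 : Fin 2) ^ (i + 1)) ^ g *
        (1 + MvPowerSeries.X (0 : Fin 2) ^ (i + 1) * MvPowerSeries.X (1 : Fin 2) ^ i) ^ g))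
      ((1 + MvPowerSeries.monomial (mm 2 1) (1 : ℤ)) ^ g) := by
    have hstep : ∀ a b : ℕ, 2 ≤ b →
        Req (1 + (MvPowerSeries.X (0 : Fin 2) : R2) ^ a * MvPowerSeries.X (1 : Fin 2) ^ b) 1 := by
      intro a b hb
      unfold Req
      have h' : (1 + (MvPowerSeries.X (0 : Fin 2) : R2) ^ a * MvPowerSeries.X (1 : Fin 2) ^ b) - 1
          = (MvPowerSeries.X (0 : Fin 2) : R2) ^ a * MvPowerSeries.X (1 : Fin 2) ^ b := by ring
      rw [h', XX]
      exact E_monomial (by rw [mm_apply1]; omega)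
    have hfac : ∀ i ∈ Finset.Icc 1 (r - 1),
        Req ((1 + MvPowerSeries.X (0 : Fin 2) ^ i * MvPowerSeries.X (1 : Fin 2) ^ (i + 1)) ^ g *
          (1 + MvPowerSeries.X (0 : Fin 2) ^ (i + 1) * MvPowerSeries.X (1 : Fin 2) ^ i) ^ g)
          (if i = 1 then (1 + MvPowerSeries.monomial (mm 2 1) (1 : ℤ)) ^ g else 1) := by
      intro i hi
      have h1 : Req ((1 + (MvPowerSeries.X (0 : Fin 2) : R2) ^ i *
          MvPowerSeries.X (1 : Fin 2) ^ (i + 1)) ^ g) 1 := by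
        have hi1 : 1 ≤ i := (Finset.mem_Icc.mp hi).1
        have := Req_pow (hstep i (i + 1) (by omega)) g
        rwa [one_pow] at this
      by_cases h : i = 1
      · subst h
        rw [if_pos rfl]
        have h2 : (1 + (MvPowerSeries.X (0 : Fin 2) : R2) ^ (1 + 1) *
            MvPowerSeries.X (1 : Fin 2) ^ 1) ^ g =
            (1 + MvPowerSeries.monomial (mm 2 1) (1 : ℤ)) ^ g := by
          rw [XX]
        rw [h2]
        have := Req_mul h1 (Req_refl ((1 + MvPowerSeries.monomial (mm 2 1) (1 : ℤ)) ^ g))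
        rwa [one_mul] at this
      · rw [if_neg h]
        have hi2 : 2 ≤ i := by rw [Finset.mem_Icc] at hi; omega
        have h2 : Req ((1 + (MvPowerSeries.X (0 : Fin 2) : R2) ^ (i + 1) *
            MvPowerSeries.X (1 : Fin 2) ^ i) ^ g) 1 := by
          have := Req_pow (hstep (i + 1) i hi2) g
          rwa [one_pow] at this
        have := Req_mul h1 h2
        rwa [one_mul] at this
    have := Req_prod hfac
    rwa [Finset.prod_ite_eq' (Finset.Icc 1 (r - 1)) 1
      (fun _ => (1 + MvPowerSeries.monomial (mm 2 1) (1 : ℤ)) ^ g), if_pos h1mem] at this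
  -- key coefficient identity
  have key : ∀ m : Fin 2 →₀ ℕ, m 1 ≤ 1 →
      MvPowerSeries.coeff m P -
        (if mm 1 1 ≤ m then MvPowerSeries.coeff (m - mm 1 1) P else 0) =
      MvPowerSeries.coeff m ((1 + MvPowerSeries.monomial (mm 2 1) (1 : ℤ)) ^ g) := by
    intro m hm
    have hPD := congrArg (MvPowerSeries.coeff m) hP
    rw [Req_coeff hN hm] at hPD
    -- split P * D
    rw [show P * (∏ i ∈ Finset.Icc 1 (r - 1),
        ((1 - (MvPowerSeries.X (0 : Fin 2) * MvPowerSeries.X (1 : Fin 2)) ^ i) *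
          (1 - (MvPowerSeries.X (0 : Fin 2) * MvPowerSeries.X (1 : Fin 2)) ^ (i + 1)))) =
        (P - P * MvPowerSeries.monomial (mm 1 1) (1 : ℤ)) +
        P * ((∏ i ∈ Finset.Icc 1 (r - 1),
        ((1 - (MvPowerSeries.X (0 : Fin 2) * MvPowerSeries.X (1 : Fin 2)) ^ i) *
          (1 - (MvPowerSeries.X (0 : Fin 2) * MvPowerSeries.X (1 : Fin 2)) ^ (i + 1)))) -
          (1 - MvPowerSeries.monomial (mm 1 1) (1 : ℤ))) from by ring] at hPD
    rw [map_add, map_sub, E_mul P hD m hm, add_zero,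
      MvPowerSeries.coeff_mul_monomial, mul_one] at hPD
    exact hPD
  -- coefficients of P in y-degree 0
  have hy0 : ∀ a : ℕ, MvPowerSeries.coeff (mm a 0) P = if a = 0 then 1 else 0 := by
    intro a
    have h := key (mm a 0) (by rw [mm_apply1]; omega)
    rw [if_neg (fun hle => by
      have := Finsupp.le_def.mp hle 1
      rw [mm_apply1, mm_apply1] at this
      omega), sub_zero, coeff_binom_y0] at h
    exact h
  -- coefficients of P in y-degree 1
  have hy1 : ∀ a : ℕ, MvPowerSeries.coeff (mm a 1) P =
      (if a = 2 then (g : ℤ) else 0) + (if a = 1 then 1 else 0) := by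
    intro a
    have h := key (mm a 1) (by rw [mm_apply1])
    rw [coeff_binom_y1] at h
    by_cases ha : a = 0
    · subst ha
      rw [if_neg (fun hle => by
        have := Finsupp.le_def.mp hle 0
        rw [mm_apply0, mm_apply0] at this
        omega), sub_zero] at h
      rw [h]
      norm_num
    · rw [if_pos (mm_le.mpr ⟨by omega, le_refl 1⟩), mm_sub] at h
      norm_num at h
      rw [hy0 (a - 1)] at h
      have hiff : (a - 1 = 0) = (a = 1) := by
        apply propext; omega
      simp only [hiff] at h
      linarith [h]
  have e1 : Finsupp.single (1 : Fin 2) 1 = mm 0 1 := by simp [mm]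
  have e2 : Finsupp.single (0 : Fin 2) 1 + Finsupp.single (1 : Fin 2) 1 = mm 1 1 := rfl
  have e3 : Finsupp.single (0 : Fin 2) 2 + Finsupp.single (1 : Fin 2) 1 = mm 2 1 := rfl
  refine ⟨?_, ?_, ?_, ?_⟩
  · rw [e1, hy1]; norm_num
  · rw [e2, hy1]; norm_num
  · rw [e3, hy1]; norm_num
  · intro i hi
    have e4 : Finsupp.single (0 : Fin 2) i + Finsupp.single (1 : Fin 2) 1 = mm i 1 := rfl
    rw [e4, hy1, if_neg (by omega : ¬ i = 2), if_neg (by omega : ¬ i = 1), add_zero]
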